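/- Let β, δ, p, q > 0 with q < β^p and β < 1, and let (Z_k)_{k∈-ℕ₀} be a sequence of independent real random variables satisfying P(Z_k² < δ) ≤ q for every k ∈ -ℕ₀. Define v(Z) = (1-β) Σ_{k∈-ℕ₀} β^{-k} Z_k². Then E[v(Z)^{-p}] ≤ (β/(1-β))^p · (1-q)/(β^p - q) · δ^{-p}. -/

import Mathlib

open MeasureTheory ProbabilityTheory
open scoped ENNReal

/-- Geometric sum identity in `ℝ≥0∞` for ratio `≥ 1`. -/
lemma stmt8_geom_aux (R : ℝ≥0∞) (hR : 1 ≤ R) :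
    ∀ k : ℕ, R ^ k = 1 + (R - 1) * ∑ j ∈ Finset.range k, R ^ j := by
  intro k
  induction k with
  | zero => simp
  | succ n ih =>
    rw [pow_succ, Finset.sum_range_succ, mul_add, ← add_assoc, ← ih]
    have h : R ^ n + (R - 1) * R ^ n = (1 + (R - 1)) * R ^ n := by ring
    rw [h, add_tsub_cancel_of_le hR, mul_comm]

/-- inverse-moment bound for the weighted random series
`v(Z) = (1-β) Σ_{k∈-ℕ₀} β^{-k} Z_k²` (index `k : ℕ` standing for `-k`, so `β^{-k} = β^k`).
Since `v(Z)` may be infinite, it and the expectation are formulated in `ℝ≥0∞`: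
`E[v(Z)^{-p}] ≤ (β/(1-β))^p (1-q)/(β^p - q) δ^{-p}`. -/
theorem stmt8_inverse_moment_bound
    {Ω : Type*} [MeasurableSpace Ω] (μ : Measure Ω) [IsProbabilityMeasure μ]
    (β δ p q : ℝ) (hβ0 : 0 < β) (hβ1 : β < 1) (hδ : 0 < δ) (hp : 0 < p)
    (hq0 : 0 < q) (hq : q < β ^ p)
    (Z : ℕ → Ω → ℝ) (hmZ : ∀ k, Measurable (Z k))
    (hindep : iIndepFun Z μ)
    (hsmall : ∀ k : ℕ, μ {ω | (Z k ω) ^ 2 < δ} ≤ ENNReal.ofReal q) :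
    (∫⁻ ω, (∑' k : ℕ, ENNReal.ofReal ((1 - β) * β ^ k * (Z k ω) ^ 2)) ^ (-p) ∂μ)
      ≤ ENNReal.ofReal ((β / (1 - β)) ^ p * ((1 - q) / (β ^ p - q)) * δ ^ (-p)) := by
  have hβ1' : (0:ℝ) < 1 - β := by linarith
  have hbpos : (0:ℝ) < β ^ p := Real.rpow_pos_of_pos hβ0 p
  set r : ℝ := β ^ (-p) with hr_def
  have hrpos : 0 < r := Real.rpow_pos_of_pos hβ0 _
  have hr_inv : r = (β ^ p)⁻¹ := by rw [hr_def, Real.rpow_neg hβ0.le]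
  have hr1 : 1 < r := by
    rw [hr_inv, lt_inv_comm₀ one_pos hbpos, inv_one]
    exact Real.rpow_lt_one hβ0.le hβ1 hp
  have hrq1 : r * q < 1 := by
    rw [hr_inv, inv_mul_lt_iff₀ hbpos]; linarith
  set Cr : ℝ := ((1 - β) * δ) ^ (-p) with hCr_def
  have hCrpos : 0 < Cr := Real.rpow_pos_of_pos (by positivity) _
  set R : ℝ≥0∞ := ENNReal.ofReal r with hR_def
  set Q : ℝ≥0∞ := ENNReal.ofReal q with hQ_def
  set C : ℝ≥0∞ := ENNReal.ofReal Cr with hC_def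
  have hRlt : 1 < R := by
    rw [hR_def, ← ENNReal.ofReal_one]
    exact ENNReal.ofReal_lt_ofReal_iff hrpos |>.mpr hr1
  have hRne_top : R ≠ ⊤ := ENNReal.ofReal_ne_top
  -- the events
  set B : Set ℝ := {x | x ^ 2 < δ} with hB_def
  have hBmeas : MeasurableSet B :=
    measurableSet_lt (by fun_prop) measurable_const
  set S : ℕ → Set Ω := fun n => ⋂ i ∈ Finset.range n, Z i ⁻¹' B with hS_def
  have hSmeas : ∀ n, MeasurableSet (S n) := fun n =>
    Finset.measurableSet_biInter _ fun i _ => (hmZ i) hBmeas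
  have hSbound : ∀ n, μ (S n) ≤ Q ^ n := by
    intro n
    have hind := hindep.measure_inter_preimage_eq_mul (Finset.range n)
      (sets := fun _ => B) (fun i _ => hBmeas)
    rw [hS_def]
    rw [hind]
    calc ∏ i ∈ Finset.range n, μ (Z i ⁻¹' B)
        ≤ ∏ _i ∈ Finset.range n, Q := Finset.prod_le_prod' fun i _ => hsmall i
      _ = Q ^ n := by rw [Finset.prod_const, Finset.card_range]
  -- the majorant
  set g : Ω → ℝ≥0∞ := fun ω =>
    C * (1 + (R - 1) * ∑' j : ℕ, (S (j + 1)).indicator (fun _ => R ^ j) ω) with hg_def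
  -- pointwise bound
  have hpointwise : ∀ ω,
      (∑' k : ℕ, ENNReal.ofReal ((1 - β) * β ^ k * (Z k ω) ^ 2)) ^ (-p) ≤ g ω := by
    intro ω
    by_cases hcase : ∀ k, (Z k ω) ^ 2 < δ
    · have hmem : ∀ j, ω ∈ S (j + 1) := fun j =>
        Set.mem_iInter₂.mpr fun i _ => hcase i
      have htop : g ω = ⊤ := by
        have h1 : (∑' j : ℕ, (S (j + 1)).indicator (fun _ => R ^ j) ω)
            = ∑' j : ℕ, R ^ j := by
          refine tsum_congr fun j => ?_
          exact Set.indicator_of_mem (hmem j) _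
        have h2 : (∑' j : ℕ, R ^ j) = ⊤ := by
          rw [ENNReal.tsum_geometric, tsub_eq_zero_of_le hRlt.le, ENNReal.inv_zero]
        have hR1ne : R - 1 ≠ 0 := by
          simp only [ne_eq, tsub_eq_zero_iff_le, not_le]
          exact hRlt
        have hCne : C ≠ 0 := (ENNReal.ofReal_pos.mpr hCrpos).ne'
        rw [hg_def]
        simp only []
        rw [h1, h2, ENNReal.mul_top hR1ne]
        simp [ENNReal.mul_top hCne]
      rw [htop]; exact le_top
    · push_neg at hcase
      obtain ⟨k, hk, hkmin⟩ : ∃ k, δ ≤ (Z k ω) ^ 2 ∧ ∀ j < k, (Z j ω) ^ 2 < δ :=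
        ⟨Nat.find hcase, Nat.find_spec hcase,
          fun j hj => not_le.mp (Nat.find_min hcase hj)⟩
      have hterm : ENNReal.ofReal ((1 - β) * β ^ k * δ)
          ≤ ∑' k' : ℕ, ENNReal.ofReal ((1 - β) * β ^ k' * (Z k' ω) ^ 2) := by
        refine le_trans (ENNReal.ofReal_le_ofReal ?_) (ENNReal.le_tsum k)
        have hnn : (0:ℝ) ≤ (1 - β) * β ^ k := by positivity
        calc (1 - β) * β ^ k * δ ≤ (1 - β) * β ^ k * (Z k ω) ^ 2 :=
          mul_le_mul_of_nonneg_left hk hnn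
          _ = _ := rfl
      have h1 : (∑' k' : ℕ, ENNReal.ofReal ((1 - β) * β ^ k' * (Z k' ω) ^ 2)) ^ (-p)
          ≤ (ENNReal.ofReal ((1 - β) * β ^ k * δ)) ^ (-p) := by
        rw [ENNReal.rpow_neg, ENNReal.rpow_neg]
        exact ENNReal.inv_le_inv.mpr (ENNReal.rpow_le_rpow hterm hp.le)
      have h2 : (ENNReal.ofReal ((1 - β) * β ^ k * δ)) ^ (-p) = C * R ^ k := by
        have hapos : (0:ℝ) < (1 - β) * β ^ k * δ := by positivity
        rw [ENNReal.ofReal_rpow_of_pos hapos]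
        rw [show (1 - β) * β ^ k * δ = ((1 - β) * δ) * β ^ k by ring]
        rw [Real.mul_rpow (by positivity) (by positivity)]
        have hβk : ((β:ℝ) ^ k) ^ (-p) = r ^ k := by
          rw [← Real.rpow_natCast β k, ← Real.rpow_mul hβ0.le, mul_comm,
            Real.rpow_mul hβ0.le, Real.rpow_natCast]
        rw [hβk, ENNReal.ofReal_mul hCrpos.le, ENNReal.ofReal_pow hrpos.le]
      have h3 : C * R ^ k ≤ g ω := by
        rw [hg_def]
        refine mul_le_mul_right ?_ C
        rw [stmt8_geom_aux R hRlt.le k]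
        refine add_le_add_right (mul_le_mul_right ?_ _) 1
        calc ∑ j ∈ Finset.range k, R ^ j
            = ∑ j ∈ Finset.range k, (S (j + 1)).indicator (fun _ => R ^ j) ω := by
              refine Finset.sum_congr rfl fun j hj => ?_
              have hj' := Finset.mem_range.mp hj
              have hmemS : ω ∈ S (j + 1) := Set.mem_iInter₂.mpr fun i hi =>
                hkmin i (by have := Finset.mem_range.mp hi; omega)
              exact (Set.indicator_of_mem hmemS (fun _ => R ^ j)).symm
          _ ≤ ∑' j : ℕ, (S (j + 1)).indicator (fun _ => R ^ j) ω :=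
              ENNReal.sum_le_tsum _
      exact le_trans h1 (h2 ▸ h3)
  -- compute the integral of the majorant
  have hRm1ne_top : R - 1 ≠ ⊤ := (ENNReal.sub_ne_top hRne_top)
  have hintg : ∫⁻ ω, g ω ∂μ
      = C * (1 + (R - 1) * ∑' j : ℕ, R ^ j * μ (S (j + 1))) := by
    rw [hg_def]
    rw [lintegral_const_mul' _ _ ENNReal.ofReal_ne_top]
    congr 1
    rw [lintegral_add_left measurable_const]
    rw [lintegral_const_mul' _ _ hRm1ne_top]
    rw [lintegral_tsum fun j =>
      (measurable_const.indicator (hSmeas (j + 1))).aemeasurable]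
    simp only [lintegral_indicator_const (hSmeas _), lintegral_one, measure_univ]
  -- bound the tsum
  have hq1 : q < 1 := lt_trans hq (Real.rpow_lt_one hβ0.le hβ1 hp)
  have htsum : (∑' j : ℕ, R ^ j * μ (S (j + 1))) ≤ Q * (1 - R * Q)⁻¹ := by
    calc (∑' j : ℕ, R ^ j * μ (S (j + 1)))
        ≤ ∑' j : ℕ, R ^ j * Q ^ (j + 1) :=
          ENNReal.tsum_le_tsum fun j => mul_le_mul_right (hSbound (j + 1)) _
      _ = ∑' j : ℕ, Q * (R * Q) ^ j := by
          refine tsum_congr fun j => ?_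
          rw [pow_succ, mul_pow]; ring
      _ = Q * (1 - R * Q)⁻¹ := by
          rw [ENNReal.tsum_mul_left, ENNReal.tsum_geometric]
  -- final arithmetic
  have e1 : R - 1 = ENNReal.ofReal (r - 1) := by
    rw [ENNReal.ofReal_sub _ zero_le_one, ENNReal.ofReal_one]
  have hrq_pos : (0:ℝ) < 1 - r * q := by linarith
  have e3 : (1 - R * Q)⁻¹ = ENNReal.ofReal ((1 - r * q)⁻¹) := by
    rw [hR_def, hQ_def, ← ENNReal.ofReal_mul hrpos.le,
      ← ENNReal.ofReal_one, ← ENNReal.ofReal_sub _ (by positivity),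
      ← ENNReal.ofReal_inv_of_pos hrq_pos]
  have hfinal : C * (1 + (R - 1) * (Q * (1 - R * Q)⁻¹))
      = ENNReal.ofReal ((β / (1 - β)) ^ p * ((1 - q) / (β ^ p - q)) * δ ^ (-p)) := by
    rw [e1, e3, hQ_def, hC_def]
    rw [← ENNReal.ofReal_mul hq0.le, ← ENNReal.ofReal_mul (by linarith : (0:ℝ) ≤ r - 1),
      ← ENNReal.ofReal_one, ← ENNReal.ofReal_add zero_le_one
        (mul_nonneg (by linarith : (0:ℝ) ≤ r - 1)
          (mul_nonneg hq0.le (inv_nonneg.mpr hrq_pos.le))),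
      ← ENNReal.ofReal_mul hCrpos.le]
    congr 1
    -- pure real arithmetic
    have hb_q : β ^ p - q ≠ 0 := by linarith [hq]
    have h1β : ((1:ℝ) - β) ^ p ≠ 0 := (Real.rpow_pos_of_pos hβ1' p).ne'
    have hδp : (δ:ℝ) ^ p ≠ 0 := (Real.rpow_pos_of_pos hδ p).ne'
    have hrq_ne : (1:ℝ) - r * q ≠ 0 := hrq_pos.ne'
    rw [hCr_def, Real.rpow_neg (by positivity), Real.mul_rpow hβ1'.le hδ.le,
      Real.rpow_neg hδ.le, Real.div_rpow hβ0.le hβ1'.le, hr_inv]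
    field_simp
    ring
  calc (∫⁻ ω, (∑' k : ℕ, ENNReal.ofReal ((1 - β) * β ^ k * (Z k ω) ^ 2)) ^ (-p) ∂μ)
      ≤ ∫⁻ ω, g ω ∂μ := lintegral_mono hpointwise
    _ = C * (1 + (R - 1) * ∑' j : ℕ, R ^ j * μ (S (j + 1))) := hintg
    _ ≤ C * (1 + (R - 1) * (Q * (1 - R * Q)⁻¹)) := by
        exact mul_le_mul_right (add_le_add_right (mul_le_mul_right htsum _) 1) C
    _ = _ := hfinal
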